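/- Let A and Z be n×n complex matrices with Z nonzero and rank-deficient, and suppose A(Im(Z)) ⊄ Im(Z), where Im(Z) is the column space (range) of Z. Then for every sequence (Q_j) of invertible n×n complex matrices converging to Z, the Frobenius norms ‖Q_j^{-1} A Q_j‖ tend to infinity. -/

import Mathlib

set_option maxHeartbeats 1000000

open Filter Topology Matrix

/-- The Frobenius norm of a complex matrix. -/
noncomputable def frob {n : ℕ} (A : Matrix (Fin n) (Fin n) ℂ) : ℝ :=
  Real.sqrt (∑ i, ∑ j, ‖A i j‖ ^ 2)

lemma entry_le_frob {n : ℕ} (A : Matrix (Fin n) (Fin n) ℂ) (i j : Fin n) :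
    ‖A i j‖ ≤ frob A := by
  have h1 : ‖A i j‖ = Real.sqrt (‖A i j‖ ^ 2) := by
    rw [Real.sqrt_sq (norm_nonneg _)]
  rw [h1, frob]
  apply Real.sqrt_le_sqrt
  calc ‖A i j‖ ^ 2 ≤ ∑ j', ‖A i j'‖ ^ 2 :=
        Finset.single_le_sum (f := fun j' => ‖A i j'‖ ^ 2)
          (fun _ _ => sq_nonneg _) (Finset.mem_univ j)
    _ ≤ ∑ i', ∑ j', ‖A i' j'‖ ^ 2 :=
        Finset.single_le_sum (f := fun i' => ∑ j', ‖A i' j'‖ ^ 2)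
          (fun _ _ => Finset.sum_nonneg fun _ _ => sq_nonneg _) (Finset.mem_univ i)

/-- if `Z ≠ 0` is rank-deficient and the range of `Z` is not an
invariant subspace of `A`, then `‖Q_j⁻¹ A Q_j‖ → ∞` for every sequence of
invertible matrices `Q_j → Z`. -/
theorem frob_conj_tendsto_atTop {n : ℕ} (A Z : Matrix (Fin n) (Fin n) ℂ)
    (hZ0 : Z ≠ 0) (hZr : Z.rank < n)
    (hAZ : ¬ ∀ x ∈ LinearMap.range Z.mulVecLin, A.mulVec x ∈ LinearMap.range Z.mulVecLin)
    (Q : ℕ → Matrix (Fin n) (Fin n) ℂ) (hQ : ∀ j, IsUnit (Q j))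
    (hQZ : Tendsto Q atTop (𝓝 Z)) :
    Tendsto (fun j => frob ((Q j)⁻¹ * A * Q j)) atTop atTop := by
  set f : ℕ → Matrix (Fin n) (Fin n) ℂ := fun j => (Q j)⁻¹ * A * Q j with hf
  have hkey : ∀ j, Q j * f j = A * Q j := by
    intro j
    have hdet : IsUnit (Q j).det := (Matrix.isUnit_iff_isUnit_det _).mp (hQ j)
    simp only [hf]
    rw [← mul_assoc, ← mul_assoc, Matrix.mul_nonsing_inv _ hdet, one_mul]
  by_contra hcon
  rw [tendsto_atTop] at hcon
  push_neg at hcon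
  obtain ⟨M, hM⟩ := hcon
  obtain ⟨φ, hφmono, hφ⟩ := Filter.extraction_of_frequently_atTop hM
  -- the subsequence is bounded, lives in a compact box
  have hcpt : IsCompact {X : Matrix (Fin n) (Fin n) ℂ | ∀ i j, ‖X i j‖ ≤ M} := by
    have hset : {X : Matrix (Fin n) (Fin n) ℂ | ∀ i j, ‖X i j‖ ≤ M} =
        Set.univ.pi (fun _ : Fin n => Set.univ.pi fun _ : Fin n =>
          Metric.closedBall (0 : ℂ) M) := by
      ext X
      constructor
      · intro h
        exact fun i _ j _ => by
          simpa [Metric.mem_closedBall, dist_zero_right] using h i j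
      · intro h i j
        have h2 := h i (Set.mem_univ i) j (Set.mem_univ j)
        simpa [Metric.mem_closedBall, dist_zero_right] using h2
    rw [hset]
    exact isCompact_univ_pi fun _ =>
      isCompact_univ_pi fun _ => isCompact_closedBall (0 : ℂ) M
  have hmem : ∀ k, f (φ k) ∈ {X : Matrix (Fin n) (Fin n) ℂ | ∀ i j, ‖X i j‖ ≤ M} := by
    intro k i j
    exact (entry_le_frob _ i j).trans (le_of_lt (hφ k))
  haveI : FirstCountableTopology (Matrix (Fin n) (Fin n) ℂ) :=
    inferInstanceAs (FirstCountableTopology (Fin n → Fin n → ℂ))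
  obtain ⟨B, _, ψ, hψmono, hBlim⟩ := hcpt.tendsto_subseq hmem
  have hQ' : Tendsto (fun k => Q (φ (ψ k))) atTop (𝓝 Z) :=
    hQZ.comp ((hφmono.comp hψmono).tendsto_atTop)
  have hmul : Tendsto (fun k => Q (φ (ψ k)) * f (φ (ψ k))) atTop (𝓝 (Z * B)) :=
    hQ'.mul hBlim
  have hmul2 : Tendsto (fun k => A * Q (φ (ψ k))) atTop (𝓝 (A * Z)) :=
    tendsto_const_nhds.mul hQ'
  have heq : Z * B = A * Z := by
    apply tendsto_nhds_unique _ hmul2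
    simpa only [hkey] using hmul
  apply hAZ
  rintro x ⟨v, rfl⟩
  refine ⟨B.mulVec v, ?_⟩
  simp only [Matrix.mulVecLin_apply]
  rw [Matrix.mulVec_mulVec, Matrix.mulVec_mulVec, heq]
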